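/- arXiv:1804.08609 — 2 statements merged into one kernel-verified Lean document; each statement's English description precedes it below -/
import Mathlib

section
/- Let A ∈ ℝ^{M×N} and let T ⊆ {1,...,N}. Suppose every vector v in the kernel of A satisfies ‖v_T‖₁ < ‖v_{T^c}‖₁ whenever v ≠ 0. Then for every vector c supported on T, c is the unique minimizer of ‖z‖₁ subject to A z = A c. -/
/-- Null space property implies ℓ¹-minimality: if every nonzero kernel vector
`v` of `A` satisfies `‖v_T‖₁ < ‖v_{Tᶜ}‖₁`, then every vector supported on `T`
is the unique ℓ¹ minimizer among solutions of `A z = A c`. -/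
theorem stmt_5 {M N : ℕ} (A : Matrix (Fin M) (Fin N) ℝ) (T : Finset (Fin N))
    (hNSP : ∀ v : Fin N → ℝ, A.mulVec v = 0 → v ≠ 0 →
      ∑ i ∈ T, |v i| < ∑ i ∈ Tᶜ, |v i|) :
    ∀ c : Fin N → ℝ, (∀ i ∉ T, c i = 0) →
      ∀ z : Fin N → ℝ, A.mulVec z = A.mulVec c → z ≠ c →
        ∑ i, |c i| < ∑ i, |z i| := by
  intro c hc z hAz hzc
  set v : Fin N → ℝ := c - z with hv
  have hAv : A.mulVec v = 0 := by
    simp [hv, Matrix.mulVec_sub, hAz]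
  have hvne : v ≠ 0 := by
    intro h
    exact hzc (by funext i; have := congrFun h i; simp [hv] at this; linarith)
  have hkey := hNSP v hAv hvne
  have h1 : ∑ i ∈ T, |c i| ≤ ∑ i ∈ T, |z i| + ∑ i ∈ T, |v i| := by
    rw [← Finset.sum_add_distrib]
    apply Finset.sum_le_sum
    intro i _
    have : c i = z i + v i := by simp [hv]
    rw [this]
    exact abs_add_le _ _
  have h2 : ∀ i ∈ Tᶜ, |v i| = |z i| := by
    intro i hi
    have : c i = 0 := hc i (by simpa using hi)
    simp [hv, this]
  have h3 : ∑ i ∈ Tᶜ, |v i| = ∑ i ∈ Tᶜ, |z i| := Finset.sum_congr rfl h2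
  have h4 : ∑ i, |c i| = ∑ i ∈ T, |c i| := by
    rw [← Finset.sum_add_sum_compl T]
    have : ∑ i ∈ Tᶜ, |c i| = 0 := by
      apply Finset.sum_eq_zero
      intro i hi
      simp [hc i (by simpa using hi)]
    rw [this, add_zero]
  have h5 : ∑ i, |z i| = ∑ i ∈ T, |z i| + ∑ i ∈ Tᶜ, |z i| :=
    (Finset.sum_add_sum_compl T _).symm
  rw [h4, h5]
  linarith
end

section
/- Let v ∈ ℝ^N, T ⊆ {1,...,N} with |T| = s ≥ 1, and partition T^c into consecutive blocks T₁^c, T₂^c, ... of size at most s, where T₁^c contains the s largest absolute entries of v in T^c, T₂^c the next s largest, and so on. Then the blockwise ℓ² norms satisfy Σ_{k≥2} ‖v_{T_k^c}‖₂ ≤ s^{-1/2} ‖v_{T^c}‖₁. -/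
/-- Blockwise estimate: partitioning `Tᶜ` into consecutive blocks of size at
most `s`, sorted so that entries of each block dominate (in absolute value)
those of the next, with full blocks preceding nonempty blocks, the sum of the
blockwise ℓ² norms of all blocks after the first is at most
`s^{-1/2} ‖v_{Tᶜ}‖₁`. -/
theorem stmt_8 {N : ℕ} (v : Fin N → ℝ) (T : Finset (Fin N)) (s : ℕ)
    (hs : 1 ≤ s) (hT : T.card = s)
    (B : ℕ → Finset (Fin N))
    (hsub : ∀ k, B k ⊆ Tᶜ)
    (hcover : ∀ i ∈ Tᶜ, ∃ k, i ∈ B k)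
    (hdisj : ∀ k l, k ≠ l → Disjoint (B k) (B l))
    (hcard : ∀ k, (B k).card ≤ s)
    (hfull : ∀ k, (B (k + 1)).Nonempty → (B k).card = s)
    (hord : ∀ k, ∀ i ∈ B (k + 1), ∀ j ∈ B k, |v i| ≤ |v j|) :
    ∑' k : ℕ, Real.sqrt (∑ i ∈ B (k + 1), v i ^ 2) ≤
      (Real.sqrt s)⁻¹ * ∑ i ∈ Tᶜ, |v i| := by
  have hs0 : (0:ℝ) < s := by exact_mod_cast hs
  have hss : (0:ℝ) < Real.sqrt s := Real.sqrt_pos.2 hs0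
  have hs2 : Real.sqrt s * Real.sqrt s = (s:ℝ) := Real.mul_self_sqrt hs0.le
  have hterm : ∀ k, Real.sqrt (∑ i ∈ B (k+1), v i ^ 2) ≤
      (Real.sqrt s)⁻¹ * ∑ j ∈ B k, |v j| := by
    intro k
    rcases (B (k+1)).eq_empty_or_nonempty with he | hne
    · rw [he]
      simp only [Finset.sum_empty, Real.sqrt_zero]
      have : (0:ℝ) ≤ ∑ j ∈ B k, |v j| :=
        Finset.sum_nonneg fun j _ => abs_nonneg _
      positivity
    · have hcardk : (B k).card = s := hfull k hne
      set S := (∑ j ∈ B k, |v j|) with hS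
      have hS0 : 0 ≤ S := Finset.sum_nonneg fun j _ => abs_nonneg _
      have hbound : ∀ i ∈ B (k+1), |v i| ≤ S / s := by
        intro i hi
        rw [le_div_iff₀ hs0]
        calc |v i| * s = ∑ _j ∈ B k, |v i| := by
              rw [Finset.sum_const, hcardk, nsmul_eq_mul]; ring
          _ ≤ S := Finset.sum_le_sum fun j hj => hord k i hi j hj
      have h1 : ∑ i ∈ B (k+1), v i ^ 2 ≤ s * (S / s)^2 := by
        calc ∑ i ∈ B (k+1), v i ^ 2 ≤ ∑ _i ∈ B (k+1), (S / s)^2 := by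
              refine Finset.sum_le_sum fun i hi => ?_
              rw [← sq_abs]
              exact pow_le_pow_left₀ (abs_nonneg _) (hbound i hi) 2
          _ = ((B (k+1)).card : ℝ) * (S / s)^2 := by
              rw [Finset.sum_const, nsmul_eq_mul]
          _ ≤ s * (S / s)^2 := by
              have : ((B (k+1)).card : ℝ) ≤ s := by exact_mod_cast hcard (k+1)
              have h2 : (0:ℝ) ≤ (S / s)^2 := sq_nonneg _
              nlinarith
      calc Real.sqrt (∑ i ∈ B (k+1), v i ^ 2) ≤ Real.sqrt (s * (S / s)^2) :=
            Real.sqrt_le_sqrt h1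
        _ = Real.sqrt s * (S / s) := by
            rw [Real.sqrt_mul hs0.le, Real.sqrt_sq (by positivity)]
        _ = (Real.sqrt s)⁻¹ * S := by
            field_simp
            nlinarith [hs2]
  apply Real.tsum_le_of_sum_range_le (fun k => Real.sqrt_nonneg _)
  intro n
  calc ∑ k ∈ Finset.range n, Real.sqrt (∑ i ∈ B (k+1), v i ^ 2)
      ≤ ∑ k ∈ Finset.range n, (Real.sqrt s)⁻¹ * ∑ j ∈ B k, |v j| :=
        Finset.sum_le_sum fun k _ => hterm k
    _ = (Real.sqrt s)⁻¹ * ∑ k ∈ Finset.range n, ∑ j ∈ B k, |v j| := by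
        rw [Finset.mul_sum]
    _ ≤ (Real.sqrt s)⁻¹ * ∑ i ∈ Tᶜ, |v i| := by
        have key : ∑ k ∈ Finset.range n, ∑ j ∈ B k, |v j| ≤ ∑ i ∈ Tᶜ, |v i| := by
          rw [← Finset.sum_biUnion]
          · exact Finset.sum_le_sum_of_subset_of_nonneg
              (Finset.biUnion_subset.2 fun k _ => hsub k)
              (fun i _ _ => abs_nonneg _)
          · intro k _ l _ hkl
            exact hdisj k l hkl
        gcongr
end
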